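/- Let P be a probability distribution on X × A × B with |A| = |B| = |X| = 2. Then the no-signaling simultaneous guessing probability equals the classical simultaneous guessing probability. -/

import Mathlib

open MeasureTheory Set

/-- Step indicator `u ↦ [u ≤ m]`. -/
noncomputable def nsInd (m : ℝ) : ℝ → ℝ := fun u => if u ≤ m then 1 else 0

lemma nsInd_anti (m : ℝ) : Antitone (nsInd m) := by
  intro x y hxy
  unfold nsInd
  split_ifs with h1 h2 <;> norm_num
  exact h2 (hxy.trans h1)

lemma nsInd_ii (m : ℝ) : IntervalIntegrable (nsInd m) volume 0 1 :=
  (nsInd_anti m).intervalIntegrable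

lemma nsInd_int (m : ℝ) (h0 : 0 ≤ m) (h1 : m ≤ 1) :
    ∫ u in (0:ℝ)..1, nsInd m u = m := by
  have h : nsInd m = Set.indicator {x : ℝ | x ≤ m} (fun _ => (1:ℝ)) := by
    funext u; by_cases h : u ≤ m <;> simp [nsInd, Set.indicator, h]
  rw [h, intervalIntegral.integral_indicator ⟨h0, h1⟩]
  simp

lemma ns_ite_mul_ite {p q : Prop} [Decidable p] [Decidable q] :
    (if p then (1:ℝ) else 0) * (if q then (1:ℝ) else 0) = if p ∧ q then 1 else 0 := by
  split_ifs <;> simp_all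

lemma ns_sum_ite_fin2 (y : Fin 2) (r : ℝ) :
    ∑ x : Fin 2, (if y = x then r else 0) = r := by
  fin_cases y <;> simp [Fin.sum_univ_two]

lemma ns_csSup_eq {S : Set ℝ} {M : ℝ} (hmem : M ∈ S) (hub : ∀ p ∈ S, p ≤ M) :
    sSup S = M :=
  le_antisymm (csSup_le ⟨M, hmem⟩ hub) (le_csSup ⟨M, hub⟩ hmem)

/-- For a distribution on {0,1}³, the no-signaling simultaneous guessing
probability equals the classical simultaneous guessing probability. -/
theorem ns_eq_classical_binary (P : Fin 2 → Fin 2 → Fin 2 → ℝ)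
    (hP0 : ∀ x a b, 0 ≤ P x a b)
    (hP1 : ∑ x, ∑ a, ∑ b, P x a b = 1) :
    sSup {p : ℝ | ∃ Q : Fin 2 → Fin 2 → Fin 2 → Fin 2 → ℝ,
        (∀ xA xB a b, 0 ≤ Q xA xB a b) ∧
        (∀ a b, ∑ xA, ∑ xB, Q xA xB a b = 1) ∧
        (∀ xB a a' b, ∑ xA, Q xA xB a b = ∑ xA, Q xA xB a' b) ∧
        (∀ xA a b b', ∑ xB, Q xA xB a b = ∑ xB, Q xA xB a b') ∧
        p = ∑ x, ∑ a, ∑ b, P x a b * Q x x a b} =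
    sSup {p : ℝ | ∃ f g : Fin 2 → Fin 2,
        p = ∑ x, ∑ a, ∑ b, P x a b * (if f a = x ∧ g b = x then 1 else 0)} := by
  classical
  obtain ⟨⟨f₀, g₀⟩, hmax⟩ := Finite.exists_max
      (fun p : (Fin 2 → Fin 2) × (Fin 2 → Fin 2) =>
        ∑ x, ∑ a, ∑ b, P x a b * (if p.1 a = x ∧ p.2 b = x then (1:ℝ) else 0))
  set M : ℝ := ∑ x, ∑ a, ∑ b, P x a b * (if f₀ a = x ∧ g₀ b = x then (1:ℝ) else 0) with hMdef
  have hmax' : ∀ f g : Fin 2 → Fin 2,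
      (∑ x, ∑ a, ∑ b, P x a b * (if f a = x ∧ g b = x then (1:ℝ) else 0)) ≤ M :=
    fun f g => hmax (f, g)
  -- the classical set has supremum M
  have hC : sSup {p : ℝ | ∃ f g : Fin 2 → Fin 2,
      p = ∑ x, ∑ a, ∑ b, P x a b * (if f a = x ∧ g b = x then 1 else 0)} = M := by
    refine ns_csSup_eq ⟨f₀, g₀, rfl⟩ ?_
    rintro p ⟨f, g, rfl⟩
    exact hmax' f g
  rw [hC]
  refine ns_csSup_eq ?_ ?_
  · -- M is achieved by the deterministic no-signaling box from (f₀, g₀)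
    refine ⟨fun xA xB a b => (if f₀ a = xA then 1 else 0) * (if g₀ b = xB then 1 else 0),
      ?_, ?_, ?_, ?_, ?_⟩
    · intro xA xB a b; positivity
    · intro a b
      simp only [← Finset.mul_sum, ns_sum_ite_fin2, mul_one]
    · intro xB a a' b
      simp only [← Finset.sum_mul, ns_sum_ite_fin2, one_mul]
    · intro xA a b b'
      simp only [← Finset.mul_sum, ns_sum_ite_fin2, mul_one]
    · simp only [ns_ite_mul_ite]; exact hMdef
  · -- every no-signaling value is at most M
    rintro p ⟨Q, hQ0, hQ1, hQA, hQB, rfl⟩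
    set t : Fin 2 → ℝ := fun a => ∑ xB, Q 0 xB a 0 with htdef
    set s : Fin 2 → ℝ := fun b => ∑ xA, Q xA 0 0 b with hsdef
    have htsum : ∀ a b, ∑ xB, Q 0 xB a b = t a := fun a b => hQB 0 a b 0
    have hssum : ∀ a b, ∑ xA, Q xA 0 a b = s b := fun a b => hQA 0 a 0 b
    have ht0 : ∀ a, 0 ≤ t a := fun a => Finset.sum_nonneg fun xB _ => hQ0 _ _ _ _
    have hs0 : ∀ b, 0 ≤ s b := fun b => Finset.sum_nonneg fun xA _ => hQ0 _ _ _ _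
    have ht1 : ∀ a, t a ≤ 1 := by
      intro a
      have h1 := hQ1 a 0
      have h2 := htsum a 0
      simp only [Fin.sum_univ_two] at h1 h2 ⊢
      have := hQ0 1 0 a 0; have := hQ0 1 1 a 0
      simp only [htdef, Fin.sum_univ_two]
      linarith
    have hs1 : ∀ b, s b ≤ 1 := by
      intro b
      have h1 := hQ1 0 b
      have h2 := hssum 0 b
      simp only [Fin.sum_univ_two] at h1 h2 ⊢
      have := hQ0 0 1 0 b; have := hQ0 1 1 0 b
      simp only [hsdef, Fin.sum_univ_two]
      linarith
    have hmin : ∀ a b, Q 0 0 a b ≤ min (t a) (s b) := by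
      intro a b
      have h2 := htsum a b
      have h3 := hssum a b
      simp only [Fin.sum_univ_two] at h2 h3
      have := hQ0 0 1 a b; have := hQ0 1 0 a b
      exact le_min (by linarith) (by linarith)
    have hmax2 : ∀ a b, Q 1 1 a b ≤ 1 - max (t a) (s b) := by
      intro a b
      have h1 := hQ1 a b
      have h2 := htsum a b
      have h3 := hssum a b
      simp only [Fin.sum_univ_two] at h1 h2 h3
      rcases max_cases (t a) (s b) with ⟨hm, _⟩ | ⟨hm, _⟩ <;> rw [hm] <;>
        [linarith [hQ0 1 0 a b]; linarith [hQ0 0 1 a b]]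
    -- the relaxed value F
    set F : ℝ := ∑ a, ∑ b, (P 0 a b * min (t a) (s b) + P 1 a b * (1 - max (t a) (s b)))
      with hFdef
    have hpF : (∑ x, ∑ a, ∑ b, P x a b * Q x x a b) ≤ F := by
      rw [Fin.sum_univ_two (f := fun x => ∑ a, ∑ b, P x a b * Q x x a b), hFdef]
      have : ∀ a : Fin 2, ∀ b : Fin 2,
          P 0 a b * Q 0 0 a b + P 1 a b * Q 1 1 a b
            ≤ P 0 a b * min (t a) (s b) + P 1 a b * (1 - max (t a) (s b)) := by
        intro a b
        have h1 := mul_le_mul_of_nonneg_left (hmin a b) (hP0 0 a b)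
        have h2 := mul_le_mul_of_nonneg_left (hmax2 a b) (hP0 1 a b)
        linarith
      calc (∑ a, ∑ b, P 0 a b * Q 0 0 a b) + ∑ a, ∑ b, P 1 a b * Q 1 1 a b
          = ∑ a, ∑ b, (P 0 a b * Q 0 0 a b + P 1 a b * Q 1 1 a b) := by
            rw [← Finset.sum_add_distrib]
            exact Finset.sum_congr rfl fun a _ => by rw [← Finset.sum_add_distrib]
        _ ≤ _ := Finset.sum_le_sum fun a _ => Finset.sum_le_sum fun b _ => this a b
    -- F is an integral of classical values
    set H : Fin 2 → Fin 2 → ℝ → ℝ := fun a b u =>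
      P 0 a b * nsInd (min (t a) (s b)) u + P 1 a b * (1 - nsInd (max (t a) (s b)) u)
      with hHdef
    have hii : ∀ a b : Fin 2, IntervalIntegrable (H a b) volume 0 1 :=
      fun a b => ((nsInd_ii _).const_mul _).add
        (((intervalIntegrable_const).sub (nsInd_ii _)).const_mul _)
    have key : ∀ a b : Fin 2,
        P 0 a b * min (t a) (s b) + P 1 a b * (1 - max (t a) (s b))
          = ∫ u in (0:ℝ)..1, H a b u := by
      intro a b
      rw [hHdef]
      rw [intervalIntegral.integral_add ((nsInd_ii _).const_mul _)
            (((intervalIntegrable_const).sub (nsInd_ii _)).const_mul _),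
          intervalIntegral.integral_const_mul, intervalIntegral.integral_const_mul,
          intervalIntegral.integral_sub intervalIntegrable_const (nsInd_ii _),
          nsInd_int _ (le_min (ht0 a) (hs0 b)) (min_le_of_left_le (ht1 a)),
          nsInd_int _ (le_max_of_le_left (ht0 a)) (max_le (ht1 a) (hs1 b)),
          intervalIntegral.integral_const]
      norm_num
    set G : ℝ → ℝ := fun u => H 0 0 u + H 0 1 u + (H 1 0 u + H 1 1 u) with hGdef
    have hGii : IntervalIntegrable G volume 0 1 :=
      ((hii 0 0).add (hii 0 1)).add ((hii 1 0).add (hii 1 1))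
    have hFG : F = ∫ u in (0:ℝ)..1, G u := by
      rw [hFdef]
      simp only [Fin.sum_univ_two]
      rw [key 0 0, key 0 1, key 1 0, key 1 1,
        ← intervalIntegral.integral_add (hii 0 0) (hii 0 1),
        ← intervalIntegral.integral_add (hii 1 0) (hii 1 1),
        ← intervalIntegral.integral_add ((hii 0 0).add (hii 0 1)) ((hii 1 0).add (hii 1 1))]
    have hGM : ∀ u ∈ Icc (0:ℝ) 1, G u ≤ M := by
      intro u _
      have h := hmax' (fun a => if u ≤ t a then 0 else 1) (fun b => if u ≤ s b then 0 else 1)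
      refine le_trans (le_of_eq ?_) h
      have e0 : ∀ a b : Fin 2, nsInd (min (t a) (s b)) u
          = (if (if u ≤ t a then (0:Fin 2) else 1) = 0 ∧ (if u ≤ s b then (0:Fin 2) else 1) = 0
              then (1:ℝ) else 0) := by
        intro a b
        by_cases h1 : u ≤ t a <;> by_cases h2 : u ≤ s b <;>
          simp [nsInd, le_min_iff, h1, h2]
      have e1 : ∀ a b : Fin 2, 1 - nsInd (max (t a) (s b)) u
          = (if (if u ≤ t a then (0:Fin 2) else 1) = 1 ∧ (if u ≤ s b then (0:Fin 2) else 1) = 1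
              then (1:ℝ) else 0) := by
        intro a b
        by_cases h1 : u ≤ t a <;> by_cases h2 : u ≤ s b <;>
          simp [nsInd, le_max_iff, h1, h2]
      simp only [hGdef, hHdef, Fin.sum_univ_two, e0, e1]
      ring
    calc (∑ x, ∑ a, ∑ b, P x a b * Q x x a b) ≤ F := hpF
      _ = ∫ u in (0:ℝ)..1, G u := hFG
      _ ≤ ∫ _u in (0:ℝ)..1, M :=
          intervalIntegral.integral_mono_on (by norm_num) hGii intervalIntegrable_const hGM
      _ = M := by simp
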